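/- Let F be an invariant sequence space over the scalar field 𝕂 and let Y be a Banach space. If (x_j)_{j=1}^∞ ∈ F^w(Y), i.e., (φ(x_j))_{j=1}^∞ ∈ F for every continuous linear functional φ ∈ Y', then sup_{φ ∈ Y', ‖φ‖ ≤ 1} ‖(φ(x_j))_{j=1}^∞‖_F < ∞. -/

import Mathlib

/-- The zero-free version `x⁰` of a sequence: if `x` has infinitely many nonzero
coordinates, it enumerates them in increasing order of index; otherwise it is `0`. -/
noncomputable def zeroFree {X : Type*} [Zero X] (x : ℕ → X) : ℕ → X :=
  haveI := Classical.dec ({j | x j ≠ 0}.Infinite)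
  if {j | x j ≠ 0}.Infinite then (fun k => x (Nat.nth (fun j => x j ≠ 0) k)) else 0

/-- An invariant sequence space over a Banach space `X`: an infinite-dimensional Banach
space of `X`-valued sequences satisfying (b1) and (b2) of Definition 2.1 of [BDFP]. -/
structure InvSeqSpace (𝕂 : Type*) [RCLike 𝕂] (X : Type*)
    [NormedAddCommGroup X] [NormedSpace 𝕂 X] where
  carrier : Submodule 𝕂 (ℕ → X)
  nrm : (ℕ → X) → ℝ
  K : ℝ
  infinite_dim : ¬ Module.Finite 𝕂 carrier
  nrm_nonneg : ∀ x ∈ carrier, 0 ≤ nrm x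
  nrm_eq_zero_iff : ∀ x ∈ carrier, (nrm x = 0 ↔ x = 0)
  nrm_add_le : ∀ x ∈ carrier, ∀ y ∈ carrier, nrm (x + y) ≤ nrm x + nrm y
  nrm_smul : ∀ (a : 𝕂), ∀ x ∈ carrier, nrm (a • x) = ‖a‖ * nrm x
  complete : ∀ u : ℕ → (ℕ → X), (∀ n, u n ∈ carrier) →
    (∀ ε : ℝ, 0 < ε → ∃ N, ∀ m ≥ N, ∀ n ≥ N, nrm (u m - u n) < ε) →
    ∃ v ∈ carrier, ∀ ε : ℝ, 0 < ε → ∃ N, ∀ n ≥ N, nrm (u n - v) < ε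
  zeroFree_mem_iff : ∀ x : ℕ → X, zeroFree x ≠ 0 → (x ∈ carrier ↔ zeroFree x ∈ carrier)
  nrm_le_K_mul : ∀ x : ℕ → X, zeroFree x ≠ 0 → x ∈ carrier → nrm x ≤ K * nrm (zeroFree x)
  coord_le_nrm : ∀ x ∈ carrier, ∀ j, ‖x j‖ ≤ nrm x

/-- A strongly invariant sequence space: an invariant sequence space containing `c₀₀(X)`
and such that a sequence belongs to it iff all its subsequences do. -/
structure StrongInvSeqSpace (𝕂 : Type*) [RCLike 𝕂] (X : Type*)
    [NormedAddCommGroup X] [NormedSpace 𝕂 X] extends InvSeqSpace 𝕂 X where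
  c00_subset : ∀ x : ℕ → X, (∃ N, ∀ j, N ≤ j → x j = 0) → x ∈ carrier
  mem_iff_subseq : ∀ x : ℕ → X,
    x ∈ carrier ↔ ∀ g : ℕ → ℕ, StrictMono g → (fun k => x (g k)) ∈ carrier

/-- `f` is compatible with a sequence space `E` (Definition 2.3 of [NP]). -/
def Compatible (𝕂 : Type*) [RCLike 𝕂] {X Y : Type*}
    [NormedAddCommGroup X] [NormedSpace 𝕂 X] [NormedAddCommGroup Y] [NormedSpace 𝕂 Y]
    (f : X → Y) (E : Set (ℕ → Y)) : Prop :=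
  f 0 = 0 ∧ ∀ (x : ℕ → X) (a : 𝕂), a ≠ 0 →
    (fun j => f (x j)) ∉ E → (fun j => f (a • x j)) ∉ E

/-- The set `G(E, f, (E_λ)_{λ∈Γ})`. -/
def Gset {𝕂 : Type*} [RCLike 𝕂] {X Y Γ : Type*}
    [NormedAddCommGroup X] [NormedSpace 𝕂 X] [NormedAddCommGroup Y] [NormedSpace 𝕂 Y]
    (E : InvSeqSpace 𝕂 X) (f : X → Y) (F : Γ → StrongInvSeqSpace 𝕂 Y) : Set (ℕ → X) :=
  {x | x ∈ E.carrier ∧ (fun j => f (x j)) ∉ ⋃ lam, ((F lam).carrier : Set (ℕ → Y))}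

/-- `W` is closed in the sequence space `E` (w.r.t. the metric induced by `E.nrm`). -/
def ClosedIn {𝕂 : Type*} [RCLike 𝕂] {X : Type*}
    [NormedAddCommGroup X] [NormedSpace 𝕂 X]
    (E : InvSeqSpace 𝕂 X) (W : Set (ℕ → X)) : Prop :=
  ∀ x ∈ E.carrier, (∀ ε : ℝ, 0 < ε → ∃ y ∈ W, E.nrm (x - y) < ε) → x ∈ W


/-- Type synonym for the coercion of the carrier of `F`, to carry norm instances. -/
def FSp {𝕂 : Type*} [RCLike 𝕂] (F : InvSeqSpace 𝕂 𝕂) : Type _ := F.carrier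

namespace FSp

variable {𝕂 : Type*} [RCLike 𝕂] {F : InvSeqSpace 𝕂 𝕂}

instance : AddCommGroup (FSp F) := inferInstanceAs (AddCommGroup F.carrier)
instance : Module 𝕂 (FSp F) := inferInstanceAs (Module 𝕂 F.carrier)

/-- The underlying sequence. -/
def seq (v : FSp F) : ℕ → 𝕂 := (show F.carrier from v).1

lemma seq_mem (v : FSp F) : v.seq ∈ F.carrier := (show F.carrier from v).2

@[simp] lemma seq_add (v w : FSp F) : (v + w).seq = v.seq + w.seq := rfl
@[simp] lemma seq_sub (v w : FSp F) : (v - w).seq = v.seq - w.seq := rfl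
@[simp] lemma seq_neg (v : FSp F) : (-v).seq = -v.seq := rfl
@[simp] lemma seq_smul (a : 𝕂) (v : FSp F) : (a • v).seq = a • v.seq := rfl
@[simp] lemma seq_zero : (0 : FSp F).seq = 0 := rfl

lemma seq_injective : Function.Injective (seq : FSp F → (ℕ → 𝕂)) :=
  fun _ _ h => Subtype.ext h

/-- The norm on `FSp F`. -/
noncomputable def norm' (F : InvSeqSpace 𝕂 𝕂) : AddGroupNorm (FSp F) where
  toFun v := F.nrm v.seq
  map_zero' := by simpa using (F.nrm_eq_zero_iff 0 (Submodule.zero_mem _)).mpr rfl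
  add_le' v w := by simpa using F.nrm_add_le v.seq v.seq_mem w.seq w.seq_mem
  neg' v := by
    have h := F.nrm_smul (-1 : 𝕂) v.seq v.seq_mem
    simpa [neg_one_smul] using h
  eq_zero_of_map_eq_zero' v h :=
    seq_injective ((F.nrm_eq_zero_iff v.seq v.seq_mem).mp h)

noncomputable instance : NormedAddCommGroup (FSp F) := (norm' F).toNormedAddCommGroup

lemma norm_def (v : FSp F) : ‖v‖ = F.nrm v.seq := rfl

noncomputable instance : NormedSpace 𝕂 (FSp F) :=
  ⟨fun a v => le_of_eq (F.nrm_smul a v.seq v.seq_mem)⟩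

instance : CompleteSpace (FSp F) := by
  apply Metric.complete_of_cauchySeq_tendsto
  intro u hu
  rw [Metric.cauchySeq_iff] at hu
  obtain ⟨v, hv, hconv⟩ := F.complete (fun n => (u n).seq) (fun n => (u n).seq_mem)
    (fun ε hε => by
      obtain ⟨N, hN⟩ := hu ε hε
      refine ⟨N, fun m hm n hn => ?_⟩
      have h := hN m hm n hn
      rw [dist_eq_norm] at h
      simpa [norm_def] using h)
  refine ⟨show F.carrier from ⟨v, hv⟩, Metric.tendsto_atTop.mpr fun ε hε => ?_⟩
  obtain ⟨N, hN⟩ := hconv ε hε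
  refine ⟨N, fun n hn => ?_⟩
  rw [dist_eq_norm (u n) (show F.carrier from ⟨v, hv⟩)]
  exact hN n hn

lemma lipschitz_coord (j : ℕ) : LipschitzWith 1 (fun v : FSp F => v.seq j) := by
  apply LipschitzWith.of_dist_le_mul
  intro v w
  rw [NNReal.coe_one, one_mul, dist_eq_norm, dist_eq_norm, norm_def]
  simpa using F.coord_le_nrm ((v - w).seq) (v - w).seq_mem j

end FSp

/-- If `F` is an invariant sequence space over `𝕂` and `(x_j) ∈ F^w(Y)`, then
`sup_{‖φ‖ ≤ 1} ‖(φ(x_j))_j‖_F < ∞`. -/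
theorem weak_seq_norm_bounded
    {𝕂 Y : Type*} [RCLike 𝕂]
    [NormedAddCommGroup Y] [NormedSpace 𝕂 Y] [CompleteSpace Y]
    (F : InvSeqSpace 𝕂 𝕂)
    (x : ℕ → Y) (hx : ∀ φ : Y →L[𝕂] 𝕂, (fun j => φ (x j)) ∈ F.carrier) :
    ∃ C : ℝ, ∀ φ : Y →L[𝕂] 𝕂, ‖φ‖ ≤ 1 → F.nrm (fun j => φ (x j)) ≤ C := by
  let T : (Y →L[𝕂] 𝕂) →ₗ[𝕂] FSp F :=
    { toFun := fun φ => show F.carrier from ⟨fun j => φ (x j), hx φ⟩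
      map_add' := fun φ ψ => rfl
      map_smul' := fun a φ => rfl }
  have hTseq : ∀ φ : Y →L[𝕂] 𝕂, (T φ).seq = fun j => φ (x j) := fun φ => rfl
  have hgraph : IsClosed (T.graph : Set ((Y →L[𝕂] 𝕂) × FSp F)) := by
    have hEq : (T.graph : Set ((Y →L[𝕂] 𝕂) × FSp F)) =
        ⋂ j, {p : (Y →L[𝕂] 𝕂) × FSp F | p.2.seq j = p.1 (x j)} := by
      ext p
      simp only [Set.mem_iInter, SetLike.mem_coe, LinearMap.mem_graph_iff, Set.mem_setOf_eq]
      constructor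
      · intro h j; rw [h, hTseq]
      · intro h
        apply FSp.seq_injective
        funext j
        rw [h j, hTseq]
    rw [hEq]
    refine isClosed_iInter fun j => isClosed_eq ?_ ?_
    · exact (FSp.lipschitz_coord j).continuous.comp continuous_snd
    · exact ((ContinuousLinearMap.apply 𝕂 𝕂 (x j)).continuous).comp continuous_fst
  have hcont : Continuous T := T.continuous_of_isClosed_graph hgraph
  let T' : (Y →L[𝕂] 𝕂) →L[𝕂] FSp F := ⟨T, hcont⟩
  refine ⟨‖T'‖, fun φ hφ => ?_⟩
  calc F.nrm (fun j => φ (x j)) = ‖T' φ‖ := rfl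
    _ ≤ ‖T'‖ * ‖φ‖ := T'.le_opNorm φ
    _ ≤ ‖T'‖ * 1 := mul_le_mul_of_nonneg_left hφ T'.opNorm_nonneg
    _ = ‖T'‖ := mul_one _
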